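/- Let δ ∈ (0,∞), s₁, s₂ ∈ (0,1), and s ∈ (0, (s₁+s₂)/2), and set ε̂ = s₁ + s₂ − 2s > 0. Then for all u ∈ H^{s₂}_Ω(ℝⁿ) and v ∈ H^{s₁}_Ω(ℝⁿ), the map s ↦ a(u,v;s) is infinitely differentiable, with kth derivative a_s^{(k)}(u,v;s) = (−2)^k ∫_{S_δ} (u(x)−u(x'))(v(x)−v(x')) log^k(|x−x'|) / |x−x'|^{n+2s} d(x',x) for k = 1,2,…, and |a_s^{(k)}(u,v;s)| ≤ C(k,ε̂) ‖u‖_{V^{s₂}} ‖v‖_{V^{s₁}}, where C(k,ε̂) = 2^k((k/(e·ε̂))^k + δ^{ε̂}(max(log δ, 0))^k). -/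

import Mathlib

set_option maxHeartbeats 2000000


open MeasureTheory Real Set

noncomputable section

/-- `ℝⁿ`. -/
abbrev En (n : ℕ) : Type := EuclideanSpace ℝ (Fin n)

/-- The (truncated) fractional bilinear form
`a(u,v;s) = ∫_{S_δ}(u(x)−u(x'))(v(x)−v(x'))/|x−x'|^{n+2s} d(x',x)`. -/
def fracForm (n : ℕ) (δ s : ℝ) (u v : En n → ℝ) : ℝ :=
  ∫ p in {p : En n × En n | dist p.1 p.2 ≤ δ},
    (u p.1 - u p.2) * (v p.1 - v p.2) / dist p.1 p.2 ^ ((n : ℝ) + 2 * s)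

/-- The `k`-th `s`-derivative of the bilinear form:
`a_s^{(k)}(u,v;s) = (−2)^k ∫_{S_δ}(u(x)−u(x'))(v(x)−v(x'))log^k(|x−x'|)/|x−x'|^{n+2s}`.
For `k = 0` this is the bilinear form itself. -/
def fracFormD (n : ℕ) (δ : ℝ) (k : ℕ) (s : ℝ) (u v : En n → ℝ) : ℝ :=
  (-2 : ℝ) ^ k *
    ∫ p in {p : En n × En n | dist p.1 p.2 ≤ δ},
      (u p.1 - u p.2) * (v p.1 - v p.2) * Real.log (dist p.1 p.2) ^ k /
        dist p.1 p.2 ^ ((n : ℝ) + 2 * s)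

/-- The energy norm `‖u‖_{V^s} = a(u,u;s)^{1/2}`. -/
def vsNorm (n : ℕ) (δ s : ℝ) (u : En n → ℝ) : ℝ := Real.sqrt (fracForm n δ s u u)

/-- Membership in `H^σ_Ω(ℝⁿ)`: `u ∈ L²(ℝⁿ)`, `u = 0` a.e. on `ℝⁿ∖Ω`, finite Gagliardo
seminorm. -/
def memHs (n : ℕ) (Ω : Set (En n)) (σ : ℝ) (u : En n → ℝ) : Prop :=
  MemLp u 2 volume ∧ (∀ᵐ x : En n, x ∉ Ω → u x = 0) ∧
  Integrable (fun p : En n × En n =>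
    (u p.1 - u p.2) ^ 2 / dist p.1 p.2 ^ ((n : ℝ) + 2 * σ))

/- ### Auxiliary definitions -/

def auxPhi (n : ℕ) (u v : En n → ℝ) (k : ℕ) (t : ℝ) (p : En n × En n) : ℝ :=
  (u p.1 - u p.2) * (v p.1 - v p.2) * Real.log (dist p.1 p.2) ^ k /
    dist p.1 p.2 ^ ((n : ℝ) + 2 * t)

def auxG (n : ℕ) (s₁ s₂ : ℝ) (u v : En n → ℝ) (p : En n × En n) : ℝ :=
  |u p.1 - u p.2| * |v p.1 - v p.2| / dist p.1 p.2 ^ ((n : ℝ) + s₁ + s₂)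

def auxP (n : ℕ) (σ : ℝ) (u : En n → ℝ) (p : En n × En n) : ℝ :=
  |u p.1 - u p.2| / dist p.1 p.2 ^ (((n : ℝ) + 2 * σ) / 2)

lemma auxG_nonneg (n : ℕ) (s₁ s₂ : ℝ) (u v : En n → ℝ) (p : En n × En n) :
    0 ≤ auxG n s₁ s₂ u v p :=
  div_nonneg (mul_nonneg (abs_nonneg _) (abs_nonneg _)) (Real.rpow_nonneg dist_nonneg _)

lemma auxP_nonneg (n : ℕ) (σ : ℝ) (u : En n → ℝ) (p : En n × En n) :
    0 ≤ auxP n σ u p :=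
  div_nonneg (abs_nonneg _) (Real.rpow_nonneg dist_nonneg _)

/- ### Auxiliary real lemmas -/

lemma aux_exp_bound (m : ℕ) {ε x : ℝ} (hε : 0 < ε) (hx : 0 ≤ x) :
    x ^ m * Real.exp (-(ε * x)) ≤ ((m : ℝ) / (Real.exp 1 * ε)) ^ m := by
  rcases Nat.eq_zero_or_pos m with rfl | hm
  · simp only [pow_zero, one_mul]
    exact Real.exp_le_one_iff.mpr (by nlinarith)
  · have hm' : (0 : ℝ) < m := by exact_mod_cast hm
    have h1 : ε * x / m ≤ Real.exp (ε * x / m - 1) := by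
      have := Real.add_one_le_exp (ε * x / m - 1); linarith
    have hkey : x ≤ (m : ℝ) / (Real.exp 1 * ε) * Real.exp (ε * x / m) := by
      have he : Real.exp (ε * x / m - 1) = Real.exp (ε * x / m) / Real.exp 1 := by
        rw [Real.exp_sub]
      rw [he] at h1
      have hepos := Real.exp_pos (1 : ℝ)
      rw [div_le_div_iff₀ (by positivity) (by positivity)] at h1
      rw [div_mul_eq_mul_div, le_div_iff₀ (by positivity)]
      nlinarith [Real.exp_pos (ε * x / m)]
    have hpow : x ^ m ≤ ((m : ℝ) / (Real.exp 1 * ε)) ^ m * Real.exp (ε * x) := by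
      calc x ^ m ≤ ((m : ℝ) / (Real.exp 1 * ε) * Real.exp (ε * x / m)) ^ m :=
            pow_le_pow_left₀ hx hkey m
        _ = ((m : ℝ) / (Real.exp 1 * ε)) ^ m * Real.exp (ε * x / m) ^ m := mul_pow _ _ m
        _ = ((m : ℝ) / (Real.exp 1 * ε)) ^ m * Real.exp (ε * x) := by
            rw [← Real.exp_nat_mul]
            congr 1
            field_simp
    calc x ^ m * Real.exp (-(ε * x))
        ≤ ((m : ℝ) / (Real.exp 1 * ε)) ^ m * Real.exp (ε * x) * Real.exp (-(ε * x)) := by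
          exact mul_le_mul_of_nonneg_right hpow (Real.exp_pos _).le
      _ = ((m : ℝ) / (Real.exp 1 * ε)) ^ m := by
          rw [mul_assoc, ← Real.exp_add]; simp

lemma aux_rpow_log (m : ℕ) {ε r δ : ℝ} (hε : 0 < ε) (hr : 0 < r) (hrδ : r ≤ δ) :
    r ^ ε * |Real.log r| ^ m ≤
      ((m : ℝ) / (Real.exp 1 * ε)) ^ m + δ ^ ε * (max (Real.log δ) 0) ^ m := by
  have hδ0 : 0 < δ := hr.trans_le hrδ
  rcases le_or_gt r 1 with h1 | h1
  · have hlog : Real.log r ≤ 0 := Real.log_nonpos hr.le h1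
    have habs : |Real.log r| = -Real.log r := abs_of_nonpos hlog
    have hre : r ^ ε = Real.exp (-(ε * (-Real.log r))) := by
      rw [Real.rpow_def_of_pos hr]; congr 1; ring
    have := aux_exp_bound m hε (x := -Real.log r) (by linarith)
    have h2 : (0:ℝ) ≤ δ ^ ε * (max (Real.log δ) 0) ^ m := by positivity
    rw [habs, hre]
    nlinarith
  · have hδ1 : (1 : ℝ) ≤ δ := h1.le.trans hrδ
    have h0r : 0 ≤ Real.log r := Real.log_nonneg h1.le
    have hlr : Real.log r ≤ max (Real.log δ) 0 :=
      le_trans (Real.log_le_log hr hrδ) (le_max_left _ _)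
    have hre : r ^ ε ≤ δ ^ ε := Real.rpow_le_rpow hr.le hrδ hε.le
    have habs : |Real.log r| = Real.log r := abs_of_nonneg h0r
    have h2 : (0:ℝ) ≤ ((m : ℝ) / (Real.exp 1 * ε)) ^ m := by positivity
    have h3 : r ^ ε * |Real.log r| ^ m ≤ δ ^ ε * (max (Real.log δ) 0) ^ m := by
      rw [habs]
      exact mul_le_mul hre (pow_le_pow_left₀ h0r hlr m) (by positivity) (by positivity)
    linarith

lemma aux_est (δ s₁ s₂ t nn : ℝ) (m : ℕ) (a b r : ℝ) (hδ : 0 < δ) (hnt : 0 < nn + 2*t)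
    (hε : 0 < s₁ + s₂ - 2*t) (hns : 0 < nn + s₁ + s₂) (hr0 : 0 ≤ r) (hr : r ≤ δ) :
    |a * b * Real.log r ^ m / r ^ (nn + 2*t)| ≤
      (((m : ℝ) / (Real.exp 1 * (s₁ + s₂ - 2*t))) ^ m +
          δ ^ (s₁ + s₂ - 2*t) * (max (Real.log δ) 0) ^ m) *
        (|a| * |b| / r ^ (nn + s₁ + s₂)) := by
  rcases eq_or_lt_of_le hr0 with rfl | hpos
  · simp [Real.zero_rpow hnt.ne', Real.zero_rpow hns.ne']
  · have key := aux_rpow_log m hε hpos hr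
    have hsplit : r ^ (nn + s₁ + s₂) = r ^ (nn + 2*t) * r ^ (s₁ + s₂ - 2*t) := by
      rw [← Real.rpow_add hpos]; congr 1; ring
    have h1 : r ^ (nn + 2*t) ≠ 0 := (Real.rpow_pos_of_pos hpos _).ne'
    have h2 : r ^ (s₁ + s₂ - 2*t) ≠ 0 := (Real.rpow_pos_of_pos hpos _).ne'
    have hEq : |a * b * Real.log r ^ m / r ^ (nn + 2*t)| =
        (r ^ (s₁ + s₂ - 2*t) * |Real.log r| ^ m) * (|a| * |b| / r ^ (nn + s₁ + s₂)) := by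
      rw [abs_div, abs_mul, abs_mul, abs_pow,
        abs_of_nonneg (Real.rpow_nonneg hr0 (nn + 2*t)), hsplit]
      field_simp
    rw [hEq]
    exact mul_le_mul_of_nonneg_right key
      (div_nonneg (mul_nonneg (abs_nonneg _) (abs_nonneg _)) (Real.rpow_nonneg hr0 _))

lemma aux_C_mono (δ : ℝ) (m : ℕ) {ε εlo εhi : ℝ} (hδ : 0 < δ) (hlo : 0 < εlo)
    (h1 : εlo ≤ ε) (h2 : ε ≤ εhi) :
    ((m : ℝ) / (Real.exp 1 * ε)) ^ m + δ ^ ε * (max (Real.log δ) 0) ^ m ≤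
      ((m : ℝ) / (Real.exp 1 * εlo)) ^ m + (δ ^ εhi + 1) * (max (Real.log δ) 0) ^ m := by
  have hε : 0 < ε := lt_of_lt_of_le hlo h1
  have e1 : ((m : ℝ) / (Real.exp 1 * ε)) ^ m ≤ ((m : ℝ) / (Real.exp 1 * εlo)) ^ m := by
    gcongr <;> first | positivity | linarith
  have e2 : δ ^ ε ≤ δ ^ εhi + 1 := by
    rcases le_total δ 1 with h | h
    · have := Real.rpow_le_one hδ.le h hε.le
      nlinarith [Real.rpow_nonneg hδ.le εhi]
    · have := Real.rpow_le_rpow_of_exponent_le h h2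
      linarith
  have e3 : δ ^ ε * (max (Real.log δ) 0) ^ m ≤ (δ ^ εhi + 1) * (max (Real.log δ) 0) ^ m := by
    apply mul_le_mul_of_nonneg_right e2
    exact pow_nonneg (le_max_right _ _) m
  linarith

lemma aux_deriv (nn r c : ℝ) (k : ℕ) {t : ℝ} (U : Set ℝ) (hU : IsOpen U) (htU : t ∈ U)
    (hpos : ∀ t' ∈ U, 0 < nn + 2*t') (hr0 : 0 ≤ r) :
    HasDerivAt (fun t' : ℝ => c * Real.log r ^ k / r ^ (nn + 2*t'))
      (-2 * (c * Real.log r ^ (k+1) / r ^ (nn + 2*t))) t := by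
  rcases eq_or_lt_of_le hr0 with rfl | hpos'
  · have hz : ∀ t' ∈ U, c * Real.log (0:ℝ) ^ k / (0:ℝ) ^ (nn + 2*t') = 0 := by
      intro t' ht'
      rw [Real.zero_rpow (hpos t' ht').ne']
      simp
    have h0 : HasDerivAt (fun t' : ℝ => c * Real.log (0:ℝ) ^ k / (0:ℝ) ^ (nn + 2*t')) 0 t := by
      refine (hasDerivAt_const t (0:ℝ)).congr_of_eventuallyEq ?_
      filter_upwards [hU.mem_nhds htU] with t' ht' using hz t' ht'
    convert h0 using 1 <;> simp [Real.log_zero]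
  · have h1 : HasDerivAt (fun t' : ℝ => nn + 2*t') 2 t := by
      simpa using ((hasDerivAt_id t).const_mul (2:ℝ)).const_add nn
    have h2 := (Real.hasStrictDerivAt_const_rpow hpos' (nn + 2*t)).hasDerivAt
    have hR : HasDerivAt (fun t' : ℝ => r ^ (nn + 2*t')) (r ^ (nn + 2*t) * Real.log r * 2) t := by
      exact h2.comp t h1
    have hRne : r ^ (nn + 2*t) ≠ 0 := (Real.rpow_pos_of_pos hpos' _).ne'
    have hD := (hasDerivAt_const t (c * Real.log r ^ k)).div hR hRne
    refine hD.congr_deriv ?_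
    field_simp
    ring


/-- the bilinear form is infinitely differentiable with respect to `s` on
`(0,(s₁+s₂)/2)`, the `k`-th derivative being `fracFormD k`, with the bound
`|a_s^{(k)}(u,v;s)| ≤ C(k,ε̂)‖u‖_{V^{s₂}}‖v‖_{V^{s₁}}` where `ε̂ = s₁+s₂−2s` and
`C(k,ε̂) = 2^k((k/(e ε̂))^k + δ^{ε̂}(log δ)₊^k)`. -/
theorem statement10
    (n : ℕ) (hn : 1 ≤ n)
    (Ω : Set (En n)) (hΩb : Bornology.IsBounded Ω) (hΩmeas : MeasurableSet Ω)
    (hΩne : Ω.Nonempty)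
    (δ : ℝ) (hδ : 0 < δ)
    (s₁ s₂ : ℝ) (hs₁ : s₁ ∈ Set.Ioo (0 : ℝ) 1) (hs₂ : s₂ ∈ Set.Ioo (0 : ℝ) 1)
    (u v : En n → ℝ) (hu : memHs n Ω s₂ u) (hv : memHs n Ω s₁ v) :
    ∀ s ∈ Set.Ioo (0 : ℝ) ((s₁ + s₂) / 2),
      -- infinite differentiability: for every `k`, the `k`-th derivative `fracFormD k`
      -- is differentiable with derivative `fracFormD (k+1)`
      (∀ k : ℕ, HasDerivAt (fun t : ℝ => fracFormD n δ k t u v)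
        (fracFormD n δ (k + 1) s u v) s) ∧
      (fracFormD n δ 0 s u v = fracForm n δ s u v) ∧
      -- the bound on the derivatives, for `k ≥ 1`
      (∀ k : ℕ, 1 ≤ k →
        |fracFormD n δ k s u v| ≤
          2 ^ k * (((k : ℝ) / (Real.exp 1 * (s₁ + s₂ - 2 * s))) ^ k +
              δ ^ (s₁ + s₂ - 2 * s) * (max (Real.log δ) 0) ^ k) *
            vsNorm n δ s₂ u * vsNorm n δ s₁ v) := by
  intro s hs
  obtain ⟨hs0, hshalf⟩ := hs
  have hn1 : (1 : ℝ) ≤ (n : ℝ) := by exact_mod_cast hn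
  obtain ⟨hs₁0, hs₁1⟩ := hs₁
  obtain ⟨hs₂0, hs₂1⟩ := hs₂
  have hεh : 0 < s₁ + s₂ - 2 * s := by linarith
  have hns : 0 < (n : ℝ) + s₁ + s₂ := by linarith
  set Sδ : Set (En n × En n) := {p : En n × En n | dist p.1 p.2 ≤ δ} with hSδ
  have hSm : MeasurableSet Sδ :=
    (isClosed_le continuous_dist continuous_const).measurableSet
  -- measurability
  have hum : AEStronglyMeasurable u (volume : Measure (En n)) := hu.1.1
  have hvm : AEStronglyMeasurable v (volume : Measure (En n)) := hv.1.1
  have hud : AEStronglyMeasurable (fun p : En n × En n => u p.1 - u p.2) volume := by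
    rw [Measure.volume_eq_prod]; exact hum.comp_fst.sub hum.comp_snd
  have hvd : AEStronglyMeasurable (fun p : En n × En n => v p.1 - v p.2) volume := by
    rw [Measure.volume_eq_prod]; exact hvm.comp_fst.sub hvm.comp_snd
  have hdist : Measurable fun p : En n × En n => dist p.1 p.2 := measurable_dist
  have hΦm : ∀ (k : ℕ) (t : ℝ),
      AEStronglyMeasurable (auxPhi n u v k t) (volume.restrict Sδ) := by
    intro k t
    unfold auxPhi; simp only [div_eq_mul_inv]
    exact (((hud.mul hvd).mul
      (((Real.measurable_log.comp hdist).pow_const k).aestronglyMeasurable)).mul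
      (((hdist.pow measurable_const).inv).aestronglyMeasurable)).restrict
  have hGm : AEStronglyMeasurable (auxG n s₁ s₂ u v) (volume.restrict Sδ) := by
    unfold auxG; simp only [div_eq_mul_inv]
    exact (((continuous_abs.comp_aestronglyMeasurable hud).mul
      (continuous_abs.comp_aestronglyMeasurable hvd)).mul
      (((hdist.pow measurable_const).inv).aestronglyMeasurable)).restrict
  have hφm : AEStronglyMeasurable (auxP n s₂ u) (volume.restrict Sδ) := by
    unfold auxP; simp only [div_eq_mul_inv]
    exact ((continuous_abs.comp_aestronglyMeasurable hud).mul
      (((hdist.pow measurable_const).inv).aestronglyMeasurable)).restrict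
  have hψm : AEStronglyMeasurable (auxP n s₁ v) (volume.restrict Sδ) := by
    unfold auxP; simp only [div_eq_mul_inv]
    exact ((continuous_abs.comp_aestronglyMeasurable hvd).mul
      (((hdist.pow measurable_const).inv).aestronglyMeasurable)).restrict
  -- squares
  have hφsq : ∀ p : En n × En n,
      auxP n s₂ u p ^ 2 = (u p.1 - u p.2) ^ 2 / dist p.1 p.2 ^ ((n : ℝ) + 2 * s₂) := by
    intro p
    simp only [auxP]
    rw [div_pow, sq_abs]
    congr 1
    rw [← Real.rpow_natCast (dist p.1 p.2 ^ (((n : ℝ) + 2 * s₂) / 2)) 2,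
      ← Real.rpow_mul dist_nonneg]
    norm_num
  have hψsq : ∀ p : En n × En n,
      auxP n s₁ v p ^ 2 = (v p.1 - v p.2) ^ 2 / dist p.1 p.2 ^ ((n : ℝ) + 2 * s₁) := by
    intro p
    simp only [auxP]
    rw [div_pow, sq_abs]
    congr 1
    rw [← Real.rpow_natCast (dist p.1 p.2 ^ (((n : ℝ) + 2 * s₁) / 2)) 2,
      ← Real.rpow_mul dist_nonneg]
    norm_num
  have hφψ : ∀ p : En n × En n, auxP n s₂ u p * auxP n s₁ v p = auxG n s₁ s₂ u v p := by
    intro p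
    rcases eq_or_lt_of_le (dist_nonneg : (0:ℝ) ≤ dist p.1 p.2) with h0 | h0
    · have e1 : ((n:ℝ) + 2 * s₂) / 2 ≠ 0 := ne_of_gt (by linarith)
      have e2 : ((n:ℝ) + 2 * s₁) / 2 ≠ 0 := ne_of_gt (by linarith)
      have e3 : (n:ℝ) + s₁ + s₂ ≠ 0 := ne_of_gt hns
      simp [auxP, auxG, ← h0, Real.zero_rpow e1, Real.zero_rpow e2, Real.zero_rpow e3]
    · have hsum : dist p.1 p.2 ^ (((n:ℝ) + 2 * s₂) / 2) * dist p.1 p.2 ^ (((n:ℝ) + 2 * s₁) / 2)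
          = dist p.1 p.2 ^ ((n:ℝ) + s₁ + s₂) := by
        rw [← Real.rpow_add h0]; congr 1; ring
      simp only [auxP, auxG]
      rw [div_mul_div_comm, hsum]
  -- integrability of the squares and of G
  have hφint2 : Integrable (fun p => auxP n s₂ u p ^ 2) (volume.restrict Sδ) :=
    (hu.2.2.restrict).congr (Filter.Eventually.of_forall fun p => (hφsq p).symm)
  have hψint2 : Integrable (fun p => auxP n s₁ v p ^ 2) (volume.restrict Sδ) :=
    (hv.2.2.restrict).congr (Filter.Eventually.of_forall fun p => (hψsq p).symm)
  have hφ2 : MemLp (auxP n s₂ u) 2 (volume.restrict Sδ) :=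
    (memLp_two_iff_integrable_sq hφm).mpr hφint2
  have hψ2 : MemLp (auxP n s₁ v) 2 (volume.restrict Sδ) :=
    (memLp_two_iff_integrable_sq hψm).mpr hψint2
  have hGint : Integrable (auxG n s₁ s₂ u v) (volume.restrict Sδ) := by
    refine Integrable.mono' ((hφint2.add hψint2).div_const 2) hGm ?_
    refine Filter.Eventually.of_forall fun p => ?_
    rw [Real.norm_eq_abs, abs_of_nonneg (auxG_nonneg n s₁ s₂ u v p), ← hφψ p]
    have := two_mul_le_add_sq (auxP n s₂ u p) (auxP n s₁ v p)
    simp only [Pi.add_apply]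
    linarith
  -- Cauchy–Schwarz
  have hconj : Real.HolderConjugate 2 2 := Real.HolderConjugate.two_two
  have hofr : (ENNReal.ofReal (2:ℝ)) = 2 := by norm_num
  have hCS : ∫ p, auxG n s₁ s₂ u v p ∂(volume.restrict Sδ) ≤
      vsNorm n δ s₂ u * vsNorm n δ s₁ v := by
    have hφnn : 0 ≤ᵐ[volume.restrict Sδ] auxP n s₂ u :=
      Filter.Eventually.of_forall fun p => auxP_nonneg n s₂ u p
    have hψnn : 0 ≤ᵐ[volume.restrict Sδ] auxP n s₁ v :=
      Filter.Eventually.of_forall fun p => auxP_nonneg n s₁ v p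
    have hφ2' : MemLp (auxP n s₂ u) (ENNReal.ofReal 2) (volume.restrict Sδ) := by
      rw [hofr]; exact hφ2
    have hψ2' : MemLp (auxP n s₁ v) (ENNReal.ofReal 2) (volume.restrict Sδ) := by
      rw [hofr]; exact hψ2
    have key := integral_mul_le_Lp_mul_Lq_of_nonneg hconj hφnn hψnn hφ2' hψ2'
    have hre : ∀ x : ℝ, x ^ (2:ℝ) = x ^ (2:ℕ) := fun x => by
      rw [← Real.rpow_natCast x 2]; norm_num
    simp only [hre, hφψ] at key
    have hfu : fracForm n δ s₂ u u = ∫ p, auxP n s₂ u p ^ 2 ∂(volume.restrict Sδ) := by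
      rw [fracForm, ← hSδ]
      refine integral_congr_ae (Filter.Eventually.of_forall fun p => ?_)
      show (u p.1 - u p.2) * (u p.1 - u p.2) / dist p.1 p.2 ^ ((n:ℝ) + 2 * s₂)
        = auxP n s₂ u p ^ 2
      rw [hφsq p, sq]
    have hfv : fracForm n δ s₁ v v = ∫ p, auxP n s₁ v p ^ 2 ∂(volume.restrict Sδ) := by
      rw [fracForm, ← hSδ]
      refine integral_congr_ae (Filter.Eventually.of_forall fun p => ?_)
      show (v p.1 - v p.2) * (v p.1 - v p.2) / dist p.1 p.2 ^ ((n:ℝ) + 2 * s₁)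
        = auxP n s₁ v p ^ 2
      rw [hψsq p, sq]
    rw [vsNorm, vsNorm, hfu, hfv, Real.sqrt_eq_rpow, Real.sqrt_eq_rpow]
    exact key
  have hGi_nn : 0 ≤ ∫ p, auxG n s₁ s₂ u v p ∂(volume.restrict Sδ) :=
    integral_nonneg fun p => auxG_nonneg n s₁ s₂ u v p
  -- pointwise estimate and integrability for Φ
  have hest : ∀ (m : ℕ) (t : ℝ), 0 < (n:ℝ) + 2*t → 0 < s₁ + s₂ - 2*t →
      ∀ p ∈ Sδ, |auxPhi n u v m t p| ≤
        (((m : ℝ) / (Real.exp 1 * (s₁ + s₂ - 2*t))) ^ m +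
          δ ^ (s₁ + s₂ - 2*t) * (max (Real.log δ) 0) ^ m) * auxG n s₁ s₂ u v p := by
    intro m t h1 h2 p hp
    simpa [auxPhi, auxG] using
      aux_est δ s₁ s₂ t (n:ℝ) m (u p.1 - u p.2) (v p.1 - v p.2) (dist p.1 p.2)
        hδ h1 h2 hns dist_nonneg hp
  have hΦint : ∀ (m : ℕ) (t : ℝ), 0 < (n:ℝ) + 2*t → 0 < s₁ + s₂ - 2*t →
      Integrable (auxPhi n u v m t) (volume.restrict Sδ) := by
    intro m t h1 h2
    refine Integrable.mono' (hGint.const_mul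
      (((m : ℝ) / (Real.exp 1 * (s₁ + s₂ - 2*t))) ^ m +
        δ ^ (s₁ + s₂ - 2*t) * (max (Real.log δ) 0) ^ m)) (hΦm m t) ?_
    filter_upwards [ae_restrict_mem hSm] with p hp
    rw [Real.norm_eq_abs]
    exact hest m t h1 h2 p hp
  refine ⟨?_, ?_, ?_⟩
  · -- differentiability
    intro k
    set ρ : ℝ := min (s / 2) ((s₁ + s₂ - 2 * s) / 4) with hρdef
    have hρ0 : 0 < ρ := lt_min (by linarith) (by linarith)
    have hρa : ρ ≤ s / 2 := min_le_left _ _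
    have hρb : ρ ≤ (s₁ + s₂ - 2 * s) / 4 := min_le_right _ _
    have hmem : ∀ t ∈ Metric.ball s ρ,
        0 < t ∧ (s₁ + s₂ - 2 * s) / 2 ≤ s₁ + s₂ - 2 * t ∧ s₁ + s₂ - 2 * t ≤ s₁ + s₂ := by
      intro t ht
      rw [Metric.mem_ball, Real.dist_eq] at ht
      obtain ⟨h1, h2⟩ := abs_lt.mp ht
      have ht0 : 0 < t := by linarith
      exact ⟨ht0, by linarith, by linarith⟩
    have hFmeas : ∀ᶠ t in nhds s, AEStronglyMeasurable (auxPhi n u v k t) (volume.restrict Sδ) :=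
      Filter.Eventually.of_forall fun t => hΦm k t
    have hFint : Integrable (auxPhi n u v k s) (volume.restrict Sδ) :=
      hΦint k s (by linarith) hεh
    have hF'meas : AEStronglyMeasurable (fun p => -2 * auxPhi n u v (k+1) s p)
        (volume.restrict Sδ) := (hΦm (k+1) s).const_mul (-2)
    have hbound : ∀ᵐ p ∂(volume.restrict Sδ), ∀ t ∈ Metric.ball s ρ,
        ‖-2 * auxPhi n u v (k+1) t p‖ ≤
          2 * ((((k+1 : ℕ) : ℝ) / (Real.exp 1 * ((s₁ + s₂ - 2 * s) / 2))) ^ (k+1) +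
            (δ ^ (s₁ + s₂) + 1) * (max (Real.log δ) 0) ^ (k+1)) * auxG n s₁ s₂ u v p := by
      filter_upwards [ae_restrict_mem hSm] with p hp
      intro t ht
      obtain ⟨ht0, hta, htb⟩ := hmem t ht
      have hnt : 0 < (n:ℝ) + 2 * t := by linarith
      have hεt : 0 < s₁ + s₂ - 2 * t := lt_of_lt_of_le (by linarith) hta
      have e1 := hest (k+1) t hnt hεt p hp
      have e2 := aux_C_mono δ (k+1) hδ (show 0 < (s₁ + s₂ - 2 * s) / 2 by linarith) hta htb
      have hGnn := auxG_nonneg n s₁ s₂ u v p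
      calc ‖-2 * auxPhi n u v (k+1) t p‖ = 2 * |auxPhi n u v (k+1) t p| := by
            rw [Real.norm_eq_abs, abs_mul]; norm_num
        _ ≤ 2 * (((((k+1:ℕ)) : ℝ) / (Real.exp 1 * (s₁ + s₂ - 2*t))) ^ (k+1) +
              δ ^ (s₁ + s₂ - 2*t) * (max (Real.log δ) 0) ^ (k+1)) * auxG n s₁ s₂ u v p := by
            rw [mul_assoc]
            exact mul_le_mul_of_nonneg_left e1 (by norm_num)
        _ ≤ 2 * ((((k+1:ℕ) : ℝ) / (Real.exp 1 * ((s₁ + s₂ - 2 * s) / 2))) ^ (k+1) +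
              (δ ^ (s₁ + s₂) + 1) * (max (Real.log δ) 0) ^ (k+1)) * auxG n s₁ s₂ u v p := by
            apply mul_le_mul_of_nonneg_right _ hGnn
            apply mul_le_mul_of_nonneg_left e2 (by norm_num)
    have hbint : Integrable (fun p =>
        2 * ((((k+1 : ℕ) : ℝ) / (Real.exp 1 * ((s₁ + s₂ - 2 * s) / 2))) ^ (k+1) +
          (δ ^ (s₁ + s₂) + 1) * (max (Real.log δ) 0) ^ (k+1)) * auxG n s₁ s₂ u v p)
        (volume.restrict Sδ) := hGint.const_mul _
    have hdiff : ∀ᵐ p ∂(volume.restrict Sδ), ∀ t ∈ Metric.ball s ρ,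
        HasDerivAt (fun t' => auxPhi n u v k t' p) (-2 * auxPhi n u v (k+1) t p) t := by
      refine Filter.Eventually.of_forall fun p t ht => ?_
      have := aux_deriv (n:ℝ) (dist p.1 p.2) ((u p.1 - u p.2) * (v p.1 - v p.2)) k
        (Metric.ball s ρ) Metric.isOpen_ball ht
        (fun t' ht' => by have := (hmem t' ht').1; linarith) dist_nonneg
      simpa only [auxPhi] using this
    have main := hasDerivAt_integral_of_dominated_loc_of_deriv_le (Metric.ball_mem_nhds s hρ0) hFmeas hFint hF'meas
      hbound hbint hdiff
    have h2 := main.2.const_mul ((-2:ℝ) ^ k)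
    have hval : (-2:ℝ) ^ k * ∫ p, -2 * auxPhi n u v (k+1) s p ∂(volume.restrict Sδ) =
        fracFormD n δ (k+1) s u v := by
      rw [integral_const_mul]
      show _ = (-2 : ℝ) ^ (k+1) * ∫ p in Sδ, auxPhi n u v (k+1) s p
      rw [pow_succ]
      ring
    rw [hval] at h2
    exact h2
  · -- k = 0 case
    rw [fracFormD, fracForm]
    norm_num
  · -- the bound
    intro k hk
    have hC0 : 0 ≤ ((k : ℝ) / (Real.exp 1 * (s₁ + s₂ - 2 * s))) ^ k +
        δ ^ (s₁ + s₂ - 2 * s) * (max (Real.log δ) 0) ^ k := by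
      apply add_nonneg
      · apply pow_nonneg
        apply div_nonneg (Nat.cast_nonneg k)
        positivity
      · exact mul_nonneg (Real.rpow_nonneg hδ.le _) (pow_nonneg (le_max_right _ _) _)
    have habs : |fracFormD n δ k s u v| =
        2 ^ k * |∫ p, auxPhi n u v k s p ∂(volume.restrict Sδ)| := by
      rw [fracFormD, ← hSδ, abs_mul, abs_pow, abs_neg, abs_two]
      rfl
    have h1 : |∫ p, auxPhi n u v k s p ∂(volume.restrict Sδ)| ≤
        ∫ p, |auxPhi n u v k s p| ∂(volume.restrict Sδ) := by
      simpa only [Real.norm_eq_abs] using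
        norm_integral_le_integral_norm (μ := volume.restrict Sδ) (auxPhi n u v k s)
    have h2 : ∫ p, |auxPhi n u v k s p| ∂(volume.restrict Sδ) ≤
        ∫ p, (((k : ℝ) / (Real.exp 1 * (s₁ + s₂ - 2 * s))) ^ k +
          δ ^ (s₁ + s₂ - 2 * s) * (max (Real.log δ) 0) ^ k) * auxG n s₁ s₂ u v p
          ∂(volume.restrict Sδ) := by
      refine integral_mono_of_nonneg (Filter.Eventually.of_forall fun p => abs_nonneg _)
        (hGint.const_mul _) ?_
      filter_upwards [ae_restrict_mem hSm] with p hp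
      exact hest k s (by linarith) hεh p hp
    have h3 : ∫ p, (((k : ℝ) / (Real.exp 1 * (s₁ + s₂ - 2 * s))) ^ k +
          δ ^ (s₁ + s₂ - 2 * s) * (max (Real.log δ) 0) ^ k) * auxG n s₁ s₂ u v p
          ∂(volume.restrict Sδ) =
        (((k : ℝ) / (Real.exp 1 * (s₁ + s₂ - 2 * s))) ^ k +
          δ ^ (s₁ + s₂ - 2 * s) * (max (Real.log δ) 0) ^ k) *
          ∫ p, auxG n s₁ s₂ u v p ∂(volume.restrict Sδ) := integral_const_mul _ _
    calc |fracFormD n δ k s u v|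
        = 2 ^ k * |∫ p, auxPhi n u v k s p ∂(volume.restrict Sδ)| := habs
      _ ≤ 2 ^ k * ((((k : ℝ) / (Real.exp 1 * (s₁ + s₂ - 2 * s))) ^ k +
            δ ^ (s₁ + s₂ - 2 * s) * (max (Real.log δ) 0) ^ k) *
            ∫ p, auxG n s₁ s₂ u v p ∂(volume.restrict Sδ)) := by
          apply mul_le_mul_of_nonneg_left _ (by positivity)
          rw [← h3]
          exact le_trans h1 h2
      _ ≤ 2 ^ k * ((((k : ℝ) / (Real.exp 1 * (s₁ + s₂ - 2 * s))) ^ k +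
            δ ^ (s₁ + s₂ - 2 * s) * (max (Real.log δ) 0) ^ k) *
            (vsNorm n δ s₂ u * vsNorm n δ s₁ v)) := by
          apply mul_le_mul_of_nonneg_left _ (by positivity)
          exact mul_le_mul_of_nonneg_left hCS hC0
      _ = 2 ^ k * (((k : ℝ) / (Real.exp 1 * (s₁ + s₂ - 2 * s))) ^ k +
            δ ^ (s₁ + s₂ - 2 * s) * (max (Real.log δ) 0) ^ k) *
            vsNorm n δ s₂ u * vsNorm n δ s₁ v := by ring


end
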